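/- Let (H, ⊳) be a right Post-Hopf algebra over a field K of characteristic zero that is connected as a coalgebra, with coradical filtration H^{≤n} = {x ∈ H : Δ̃⁽ⁿ⁾(x) = 0}. Then for every n ∈ ℕ: if x ∈ H^{≤n} and y ∈ H then x ⊳ y ∈ H^{≤n}. -/

import Mathlib

open TensorProduct

/-- A right Post-Hopf structure on a Hopf algebra `H`: `r x y = x ⊳ y`. -/
structure IsRightPostHopf (K H : Type*) [Field K] [Ring H] [HopfAlgebra K H]
    (r : H →ₗ[K] H →ₗ[K] H) : Prop where
  /-- `⊳` is compatible with the counit. -/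
  counit_r : ∀ x y : H,
    Coalgebra.counit (R := K) (r x y)
      = Coalgebra.counit (R := K) x * Coalgebra.counit (R := K) y
  /-- `⊳` is a coalgebra morphism: `Δ(x ⊳ y) = Δ(x) ⊳ Δ(y)` componentwise. -/
  comul_r : ∀ x y : H,
    Coalgebra.comul (R := K) (r x y)
      = TensorProduct.map₂ r r (Coalgebra.comul x) (Coalgebra.comul y)
  /-- `(x·y) ⊳ z = Σ (x ⊳ z⁽¹⁾)·(y ⊳ z⁽²⁾)`. -/
  mul_r : ∀ x y z : H,
    r (x * y) z
      = TensorProduct.lift ((LinearMap.mul K H).compl₁₂ (r x) (r y)) (Coalgebra.comul z)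
  /-- `(x ⊳ y) ⊳ z = x ⊳ (Σ (y ⊳ z⁽¹⁾)·z⁽²⁾)`. -/
  r_r : ∀ x y z : H,
    r (r x y) z
      = r x (TensorProduct.lift
          ((LinearMap.mul K H).compl₁₂ (r y) LinearMap.id) (Coalgebra.comul z))
  /-- The right multiplication `γ(z)(y) = y ⊳ z` is convolution invertible. -/
  conv_inv : ∃ β : H →ₗ[K] H →ₗ[K] H, ∀ x : H,
    TensorProduct.lift ((LinearMap.llcomp K H H H).compl₁₂ r.flip β) (Coalgebra.comul x)
        = Coalgebra.counit (R := K) x • (LinearMap.id : H →ₗ[K] H)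
    ∧ TensorProduct.lift ((LinearMap.llcomp K H H H).compl₁₂ β r.flip) (Coalgebra.comul x)
        = Coalgebra.counit (R := K) x • (LinearMap.id : H →ₗ[K] H)



open TensorProduct

universe u v

/-- A bundled `K`-module, used to form iterated tensor powers. -/
structure ModPack (K : Type u) [CommSemiring K] : Type (max u (v + 1)) where
  carrier : Type v
  [acg : AddCommGroup carrier]
  [mod : Module K carrier]

attribute [instance] ModPack.acg ModPack.mod

/-- `tpk K H n` is the `(n+1)`-fold tensor power `H ⊗ (H ⊗ (⋯ ⊗ H))`. -/
noncomputable def tpk (K : Type u) [CommSemiring K]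
    (H : Type v) [AddCommGroup H] [Module K H] : ℕ → ModPack.{u, v} K
  | 0 => ⟨H⟩
  | n + 1 => ⟨H ⊗[K] (tpk K H n).carrier⟩

/-- The reduced coproduct `Δ̃(x) = Δ(x) - 1 ⊗ x - x ⊗ 1 + ε(x) (1 ⊗ 1)`
(the unique linear map with `Δ̃(1) = 0` and `Δ̃(x) = Δ(x) - 1 ⊗ x - x ⊗ 1` on `ker ε`). -/
noncomputable def redComul (K : Type u) [CommSemiring K]
    (H : Type v) [Ring H] [Bialgebra K H] : H →ₗ[K] H ⊗[K] H :=
  Coalgebra.comul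
    - TensorProduct.mk K H H 1
    - (TensorProduct.mk K H H).flip 1
    + (Coalgebra.counit (R := K)).smulRight ((1 : H) ⊗ₜ[K] (1 : H))

/-- Applying `Δ̃` to the first tensor factor: `Δ̃ ⊗ id^{⊗ n}`. -/
noncomputable def frontMap (K : Type u) [CommSemiring K]
    (H : Type v) [Ring H] [Bialgebra K H] :
    (n : ℕ) → (tpk K H n).carrier →ₗ[K] (tpk K H (n + 1)).carrier
  | 0 => redComul K H
  | n + 1 =>
      (TensorProduct.assoc K H H (tpk K H n).carrier).toLinearMap
        ∘ₗ TensorProduct.map (redComul K H) LinearMap.id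

/-- The iterated reduced coproducts: `Δ̃⁽⁰⁾ = ρ` (with `ρ(x) = x - ε(x)1`), `Δ̃⁽¹⁾ = Δ̃`,
and `Δ̃⁽ᵏ⁺¹⁾ = (Δ̃ ⊗ id^{⊗ k}) ∘ Δ̃⁽ᵏ⁾`. -/
noncomputable def redIter (K : Type u) [CommSemiring K]
    (H : Type v) [Ring H] [Bialgebra K H] :
    (n : ℕ) → H →ₗ[K] (tpk K H n).carrier
  | 0 => LinearMap.id - (Coalgebra.counit (R := K)).smulRight (1 : H)
  | 1 => redComul K H
  | n + 2 => frontMap K H (n + 1) ∘ₗ redIter K H (n + 1)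

namespace Statement7Aux

open Coalgebra LinearMap

section Conv

variable {K : Type u} [Field K] {H : Type v} [Ring H] [HopfAlgebra K H]

/-- Convolution product on `Hom(H, End H)` where `End H` has composition as product. -/
noncomputable def conv (f g : H →ₗ[K] H →ₗ[K] H) : H →ₗ[K] H →ₗ[K] H :=
  TensorProduct.lift ((LinearMap.llcomp K H H H).compl₁₂ f g) ∘ₗ Coalgebra.comul

/-- The convolution unit `z ↦ ε(z) • id`. -/
noncomputable def E0 : H →ₗ[K] H →ₗ[K] H :=
  (Coalgebra.counit (R := K)).smulRight LinearMap.id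

lemma lift_compl₁₂_tmul (f g : H →ₗ[K] H →ₗ[K] H) (a b : H) :
    TensorProduct.lift ((LinearMap.llcomp K H H H).compl₁₂ f g) (a ⊗ₜ[K] b)
      = f a ∘ₗ g b := rfl

lemma conv_apply (f g : H →ₗ[K] H →ₗ[K] H) (z : H) :
    conv f g z = TensorProduct.lift ((LinearMap.llcomp K H H H).compl₁₂ f g)
      (Coalgebra.comul z) := rfl

lemma conv_assoc (f g h : H →ₗ[K] H →ₗ[K] H) :
    conv (conv f g) h = conv f (conv g h) := by
  have h1 : TensorProduct.lift ((LinearMap.llcomp K H H H).compl₁₂ (conv f g) h)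
      = TensorProduct.lift ((LinearMap.llcomp K H H H).compl₁₂
          (TensorProduct.lift ((LinearMap.llcomp K H H H).compl₁₂ f g)) h)
        ∘ₗ (Coalgebra.comul (R := K) (A := H)).rTensor H := by
    apply TensorProduct.ext'
    intro a b
    simp [conv_apply, lift_compl₁₂_tmul]
  have h2 : TensorProduct.lift ((LinearMap.llcomp K H H H).compl₁₂ f (conv g h))
      = TensorProduct.lift ((LinearMap.llcomp K H H H).compl₁₂ f
          (TensorProduct.lift ((LinearMap.llcomp K H H H).compl₁₂ g h)))
        ∘ₗ (Coalgebra.comul (R := K) (A := H)).lTensor H := by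
    apply TensorProduct.ext'
    intro a b
    simp [conv_apply, lift_compl₁₂_tmul]
  have h3 : TensorProduct.lift ((LinearMap.llcomp K H H H).compl₁₂ f
          (TensorProduct.lift ((LinearMap.llcomp K H H H).compl₁₂ g h)))
        ∘ₗ (TensorProduct.assoc K H H H).toLinearMap
      = TensorProduct.lift ((LinearMap.llcomp K H H H).compl₁₂
          (TensorProduct.lift ((LinearMap.llcomp K H H H).compl₁₂ f g)) h) := by
    apply TensorProduct.ext_threefold
    intro a b c
    rfl
  apply LinearMap.ext
  intro z
  show TensorProduct.lift _ (Coalgebra.comul z) = TensorProduct.lift _ (Coalgebra.comul z)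
  rw [h1, h2]
  simp only [LinearMap.comp_apply]
  rw [← Coalgebra.coassoc_apply (R := K) z, ← h3]
  simp [LinearMap.comp_apply]

lemma conv_E0_left (f : H →ₗ[K] H →ₗ[K] H) : conv E0 f = f := by
  apply LinearMap.ext
  intro z
  have h1 : ∀ t : H ⊗[K] H,
      TensorProduct.lift ((LinearMap.llcomp K H H H).compl₁₂ (E0 (K := K) (H := H)) f) t
        = f ((TensorProduct.lid K H) ((Coalgebra.counit (R := K)).rTensor H t)) := by
    intro t
    induction t using TensorProduct.induction_on with
    | zero => simp
    | tmul a b =>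
        simp only [lift_compl₁₂_tmul, E0, LinearMap.rTensor_tmul,
          TensorProduct.lid_tmul, map_smul]
        ext w
        simp
    | add p q hp hq => simp [map_add, hp, hq]
  show TensorProduct.lift _ (Coalgebra.comul z) = f z
  rw [h1, Coalgebra.rTensor_counit_comul]
  simp

lemma conv_E0_right (f : H →ₗ[K] H →ₗ[K] H) : conv f E0 = f := by
  apply LinearMap.ext
  intro z
  have h1 : ∀ t : H ⊗[K] H,
      TensorProduct.lift ((LinearMap.llcomp K H H H).compl₁₂ f (E0 (K := K) (H := H))) t
        = f ((TensorProduct.rid K H) ((Coalgebra.counit (R := K)).lTensor H t)) := by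
    intro t
    induction t using TensorProduct.induction_on with
    | zero => simp
    | tmul a b =>
        simp only [lift_compl₁₂_tmul, E0, LinearMap.lTensor_tmul,
          TensorProduct.rid_tmul, map_smul]
        ext w
        simp
    | add p q hp hq => simp [map_add, hp, hq]
  show TensorProduct.lift _ (Coalgebra.comul z) = f z
  rw [h1, Coalgebra.lTensor_counit_comul]
  simp

variable (r : H →ₗ[K] H →ₗ[K] H)

/-- In a right Post-Hopf algebra, `1 ⊳ y = ε(y) 1`. -/
lemma r_one (hr : IsRightPostHopf K H r) (y : H) :
    r 1 y = Coalgebra.counit (R := K) y • (1 : H) := by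
  obtain ⟨β, hβ⟩ := hr.conv_inv
  set L : H →ₗ[K] H →ₗ[K] H := (LinearMap.mul K H) ∘ₗ (r 1) with hL
  have hΓβ : conv r.flip β = E0 := by
    apply LinearMap.ext
    intro x
    rw [conv_apply, (hβ x).1]
    rfl
  have hLΓ : conv L r.flip = r.flip := by
    apply LinearMap.ext
    intro z
    apply LinearMap.ext
    intro w
    have h1 : ∀ t : H ⊗[K] H,
        TensorProduct.lift ((LinearMap.llcomp K H H H).compl₁₂ L r.flip) t w
          = TensorProduct.lift ((LinearMap.mul K H).compl₁₂ (r 1) (r w)) t := by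
      intro t
      induction t using TensorProduct.induction_on with
      | zero => simp
      | tmul a b => simp [lift_compl₁₂_tmul, hL]
      | add p q hp hq => simp [map_add, hp, hq, LinearMap.add_apply]
    have h2 : conv L r.flip z w
        = TensorProduct.lift ((LinearMap.llcomp K H H H).compl₁₂ L r.flip)
            (Coalgebra.comul z) w := rfl
    rw [h2, h1, ← hr.mul_r 1 w z, one_mul]
    rfl
  have hLE : L = E0 := by
    calc L = conv L E0 := (conv_E0_right L).symm
      _ = conv L (conv r.flip β) := by rw [hΓβ]
      _ = conv (conv L r.flip) β := (conv_assoc L r.flip β).symm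
      _ = conv r.flip β := by rw [hLΓ]
      _ = E0 := hΓβ
  have := LinearMap.congr_fun (LinearMap.congr_fun hLE y) 1
  simpa [hL, E0] using this

/-- `Δ̃(x ⊳ y) = map₂ r r (Δ̃ x) (Δ y)` : the key coalgebra-morphism identity for
the reduced coproduct. -/
lemma redComul_r (hr : IsRightPostHopf K H r) (x y : H) :
    redComul K H (r x y)
      = TensorProduct.map₂ r r (redComul K H x) (Coalgebra.comul y) := by
  have hr1 : r 1 = (Coalgebra.counit (R := K)).smulRight (1 : H) := by
    apply LinearMap.ext
    intro w
    simp [r_one r hr w]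
  have helperA : ∀ (f : H →ₗ[K] H) (t : H ⊗[K] H),
      TensorProduct.map ((Coalgebra.counit (R := K)).smulRight (1 : H)) f t
        = (1 : H) ⊗ₜ[K] f ((TensorProduct.lid K H) ((Coalgebra.counit (R := K)).rTensor H t)) := by
    intro f t
    induction t using TensorProduct.induction_on with
    | zero => simp
    | tmul a b =>
        simp only [TensorProduct.map_tmul, LinearMap.rTensor_tmul,
          TensorProduct.lid_tmul, map_smul, LinearMap.smulRight_apply,
          TensorProduct.tmul_smul, ← TensorProduct.smul_tmul']
    | add p q hp hq => simp [map_add, hp, hq, TensorProduct.tmul_add]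
  have helperB : ∀ (f : H →ₗ[K] H) (t : H ⊗[K] H),
      TensorProduct.map f ((Coalgebra.counit (R := K)).smulRight (1 : H)) t
        = f ((TensorProduct.rid K H) ((Coalgebra.counit (R := K)).lTensor H t)) ⊗ₜ[K] (1 : H) := by
    intro f t
    induction t using TensorProduct.induction_on with
    | zero => simp
    | tmul a b =>
        simp only [TensorProduct.map_tmul, LinearMap.lTensor_tmul,
          TensorProduct.rid_tmul, map_smul, LinearMap.smulRight_apply,
          TensorProduct.tmul_smul, TensorProduct.smul_tmul']
    | add p q hp hq => simp [map_add, hp, hq, TensorProduct.add_tmul]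
  have hi : TensorProduct.map₂ r r ((1 : H) ⊗ₜ[K] x) (Coalgebra.comul y)
      = (1 : H) ⊗ₜ[K] (r x y) := by
    rw [TensorProduct.map₂_apply_tmul, hr1, helperA, Coalgebra.rTensor_counit_comul]
    simp
  have hii : TensorProduct.map₂ r r (x ⊗ₜ[K] (1 : H)) (Coalgebra.comul y)
      = (r x y) ⊗ₜ[K] (1 : H) := by
    rw [TensorProduct.map₂_apply_tmul, hr1, helperB, Coalgebra.lTensor_counit_comul]
    simp
  have hiii : TensorProduct.map₂ r r ((1 : H) ⊗ₜ[K] (1 : H)) (Coalgebra.comul y)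
      = Coalgebra.counit (R := K) y • ((1 : H) ⊗ₜ[K] (1 : H)) := by
    rw [TensorProduct.map₂_apply_tmul, hr1, helperA, Coalgebra.rTensor_counit_comul]
    simp [r_one r hr y, TensorProduct.tmul_smul]
  have hx : redComul K H x = Coalgebra.comul x - (1 : H) ⊗ₜ[K] x - x ⊗ₜ[K] (1 : H)
      + Coalgebra.counit (R := K) x • ((1 : H) ⊗ₜ[K] (1 : H)) := rfl
  have hrxy : redComul K H (r x y) = Coalgebra.comul (r x y) - (1 : H) ⊗ₜ[K] (r x y)
      - (r x y) ⊗ₜ[K] (1 : H)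
      + Coalgebra.counit (R := K) (r x y) • ((1 : H) ⊗ₜ[K] (1 : H)) := rfl
  rw [hrxy, hx, hr.comul_r, hr.counit_r]
  simp only [map_sub, map_add, map_smul, LinearMap.sub_apply, LinearMap.add_apply,
    LinearMap.smul_apply, hi, hii, hiii]
  rw [mul_smul]

end Conv

section MapN

variable (K : Type u) [Field K] (H : Type v) [Ring H] [HopfAlgebra K H]
variable (r : H →ₗ[K] H →ₗ[K] H)

/-- The componentwise extension of `r` to the tensor powers `tpk K H n`. -/
noncomputable def mapN :
    (n : ℕ) → (tpk K H n).carrier →ₗ[K] (tpk K H n).carrier →ₗ[K] (tpk K H n).carrier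
  | 0 => r
  | n + 1 => TensorProduct.map₂ r (mapN n)

/-- Applying the (non-reduced) coproduct to the first tensor factor. -/
noncomputable def fullFront :
    (n : ℕ) → (tpk K H n).carrier →ₗ[K] (tpk K H (n + 1)).carrier
  | 0 => (Coalgebra.comul : H →ₗ[K] H ⊗[K] H)
  | n + 1 =>
      (TensorProduct.assoc K H H (tpk K H n).carrier).toLinearMap
        ∘ₗ TensorProduct.map Coalgebra.comul LinearMap.id

/-- The iterated (non-reduced) coproducts. -/
noncomputable def fullIter : (n : ℕ) → H →ₗ[K] (tpk K H n).carrier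
  | 0 => LinearMap.id
  | n + 1 => fullFront K H n ∘ₗ fullIter n

variable {K H}

lemma redComul_one : redComul K H (1 : H) = 0 := by
  simp [redComul, Bialgebra.comul_one, Bialgebra.counit_one, Algebra.TensorProduct.one_def]

lemma redIter_succ (n : ℕ) :
    redIter K H (n + 1) = frontMap K H n ∘ₗ redIter K H n := by
  cases n with
  | zero =>
      apply LinearMap.ext
      intro z
      show redComul K H z = redComul K H (z - Coalgebra.counit (R := K) z • (1 : H))
      simp [map_sub, map_smul, redComul_one]
  | succ n => rfl

lemma frontMap_mapN (hr : IsRightPostHopf K H r) :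
    ∀ (n : ℕ) (t s : (tpk K H n).carrier),
      frontMap K H n (mapN K H r n t s)
        = mapN K H r (n + 1) (frontMap K H n t) (fullFront K H n s) := by
  intro n
  cases n with
  | zero =>
      intro t s
      show redComul K H (r t s)
        = TensorProduct.map₂ r r (redComul K H t) (Coalgebra.comul s)
      exact redComul_r r hr t s
  | succ n =>
      have key : ∀ (p q : H ⊗[K] H) (t' s' : (tpk K H n).carrier),
          (TensorProduct.assoc K H H (tpk K H n).carrier)
              (TensorProduct.map₂ r r p q ⊗ₜ[K] mapN K H r n t' s')
            = TensorProduct.map₂ r (mapN K H r (n + 1))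
                ((TensorProduct.assoc K H H (tpk K H n).carrier) (p ⊗ₜ[K] t'))
                ((TensorProduct.assoc K H H (tpk K H n).carrier) (q ⊗ₜ[K] s')) := by
        intro p q t' s'
        induction p using TensorProduct.induction_on with
        | zero => exact (LinearMap.map_zero₂ (TensorProduct.map₂ r (mapN K H r (n + 1))) _).symm
        | tmul a1 a2 =>
            induction q using TensorProduct.induction_on with
            | zero => exact (LinearMap.map_zero _).symm
            | tmul b1 b2 =>
                show (TensorProduct.assoc K H H _)
                    ((TensorProduct.map (r a1) (r a2) (b1 ⊗ₜ[K] b2)) ⊗ₜ[K] _)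
                  = TensorProduct.map (r a1)
                      (TensorProduct.map₂ r (mapN K H r n) (a2 ⊗ₜ[K] t'))
                      (b1 ⊗ₜ[K] (b2 ⊗ₜ[K] s'))
                simp [TensorProduct.map_tmul, TensorProduct.map₂_apply_tmul,
                  TensorProduct.assoc_tmul]
            | add q1 q2 hq1 hq2 =>
                simp only [map_add, LinearMap.add_apply, TensorProduct.add_tmul,
                  TensorProduct.tmul_add] at *
                rw [hq1, hq2]
                exact (LinearMap.map_add (TensorProduct.map₂ r (mapN K H r (n + 1)) _) _ _).symm
        | add p1 p2 hp1 hp2 =>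
            simp only [map_add, LinearMap.add_apply, TensorProduct.add_tmul,
              TensorProduct.tmul_add] at *
            rw [hp1, hp2]
            exact (LinearMap.map_add₂ (TensorProduct.map₂ r (mapN K H r (n + 1))) _ _ _).symm
      intro t s
      induction t using TensorProduct.induction_on with
      | zero =>
          show frontMap K H (n+1) (mapN K H r (n+1) (0 : (tpk K H (n+1)).carrier) s)
            = mapN K H r (n+1+1) (frontMap K H (n+1) (0 : (tpk K H (n+1)).carrier))
                (fullFront K H (n+1) s)
          simp
      | tmul a t' =>
          induction s using TensorProduct.induction_on with
          | zero =>
              show frontMap K H (n+1) (mapN K H r (n+1) _ (0 : (tpk K H (n+1)).carrier))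
                = mapN K H r (n+1+1) _ (fullFront K H (n+1) (0 : (tpk K H (n+1)).carrier))
              simp
          | tmul b s' =>
              show (TensorProduct.assoc K H H _).toLinearMap
                  (TensorProduct.map (redComul K H) LinearMap.id
                    ((r a b) ⊗ₜ[K] (mapN K H r n t' s')))
                = TensorProduct.map₂ r (mapN K H r (n + 1))
                    ((TensorProduct.assoc K H H _).toLinearMap
                      (TensorProduct.map (redComul K H) LinearMap.id (a ⊗ₜ[K] t')))
                    ((TensorProduct.assoc K H H _).toLinearMap
                      (TensorProduct.map Coalgebra.comul LinearMap.id (b ⊗ₜ[K] s')))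
              simp only [TensorProduct.map_tmul, LinearMap.id_coe, id_eq,
                LinearEquiv.coe_coe]
              rw [redComul_r r hr a b]
              exact key _ _ t' s'
          | add s1 s2 hs1 hs2 =>
              rw [show mapN K H r (n+1) (a ⊗ₜ[K] t') (s1 + s2)
                  = mapN K H r (n+1) (a ⊗ₜ[K] t') s1 + mapN K H r (n+1) (a ⊗ₜ[K] t') s2
                  from LinearMap.map_add _ _ _,
                show fullFront K H (n+1) (s1 + s2) = fullFront K H (n+1) s1 + fullFront K H (n+1) s2
                  from LinearMap.map_add _ _ _, map_add, map_add]
              rw [hs1, hs2]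
      | add t1 t2 ht1 ht2 =>
          rw [show mapN K H r (n+1) (t1 + t2) = mapN K H r (n+1) t1 + mapN K H r (n+1) t2
              from LinearMap.map_add _ _ _,
            show frontMap K H (n+1) (t1 + t2) = frontMap K H (n+1) t1 + frontMap K H (n+1) t2
              from LinearMap.map_add _ _ _, LinearMap.add_apply, map_add, map_add,
            LinearMap.add_apply]
          rw [ht1, ht2]

lemma redIter_r (hr : IsRightPostHopf K H r) :
    ∀ (n : ℕ) (x y : H),
      redIter K H n (r x y) = mapN K H r n (redIter K H n x) (fullIter K H n y) := by
  intro n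
  induction n with
  | zero =>
      intro x y
      show r x y - Coalgebra.counit (R := K) (r x y) • (1 : H)
        = r (x - Coalgebra.counit (R := K) x • (1 : H)) y
      rw [hr.counit_r, map_sub, map_smul, LinearMap.sub_apply, LinearMap.smul_apply,
        r_one r hr y, mul_smul]
  | succ n ih =>
      intro x y
      rw [redIter_succ, LinearMap.comp_apply, LinearMap.comp_apply, ih,
        frontMap_mapN r hr n]
      rfl

end MapN

end Statement7Aux

/-- In a connected right Post-Hopf algebra, the coradical filtration
`H^{≤n} = ker Δ̃⁽ⁿ⁾` satisfies `H^{≤n} ⊳ H ⊆ H^{≤n}`. -/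
theorem statement7 {K : Type*} [Field K] [CharZero K]
    {H : Type*} [Ring H] [HopfAlgebra K H]
    (r : H →ₗ[K] H →ₗ[K] H) (hr : IsRightPostHopf K H r)
    (hconn : ∀ x : H, ∃ n : ℕ, redIter K H n x = 0) :
    ∀ (n : ℕ) (x y : H), redIter K H n x = 0 → redIter K H n (r x y) = 0 := by
  intro n x y h
  rw [Statement7Aux.redIter_r r hr n x y, h]
  simp
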